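/- Let (F, ‖·‖) be the space from Definition 6.3 (the space F(e₁,e₂,…) built from a normalized monotone basis of X over ℓ²(X)). Then (7/8)‖f‖_{ℓ²(X)} ≤ ‖f‖ ≤ ‖f‖_{ℓ²(X)} for all f, the basis f₁, f₂, … is monotone for ‖·‖, and for each d the unit ball of (F_d, ‖·‖) equals the convex hull of the unit balls of (F_j, |·|_j) for j = 1,…,d; in particular (F_d, ‖·‖) is a rational space. -/

import Mathlib

/-- Lemma 6.5: for the space `(F, ‖·‖)` of Definition 6.3 — here `Y` stands for `ℓ²(X)`
with its canonical norm `‖·‖`, `fv i = f_{i+1}` is its basis, `Fd d = span{f₁,…,f_d}`,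
`Nd d = |·|_d` are the chosen monotone rational norms with
`(1−2^{-(2d+1)})‖f‖ ≤ |f|_d ≤ (1−2^{-(2d+2)})‖f‖` on `F_d`, and `NF` is the norm whose
unit ball is the closed convex hull of the balls `B_{(F_d,|·|_d)}` — one has
`(7/8)‖f‖_{ℓ²(X)} ≤ NF f ≤ ‖f‖_{ℓ²(X)}`, the basis is monotone for `NF`, the `NF`-unit
ball of `F_d` equals the convex hull of the balls of `(F_j,|·|_j)`, `j ≤ d`, and in
particular `(F_d, NF)` is a rational space. -/
theorem stmt15 {Y : Type*} [NormedAddCommGroup Y] [NormedSpace ℝ Y] [CompleteSpace Y]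
    (fv : ℕ → Y)
    (Fd : ℕ → Submodule ℝ Y)
    (hFd : ∀ d : ℕ, Fd d = Submodule.span ℝ (fv '' {i | i < d}))
    (Nd : ℕ → Y → ℝ)
    (hNdnorm : ∀ d : ℕ, (∀ y z : Y, Nd d (y + z) ≤ Nd d y + Nd d z)
      ∧ (∀ (a : ℝ) (y : Y), Nd d (a • y) = |a| * Nd d y) ∧ (∀ y : Y, 0 ≤ Nd d y))
    (hNdest : ∀ d : ℕ, ∀ y ∈ Fd (d + 1),
      (1 - ((2 : ℝ) ^ (2 * (d + 1) + 1))⁻¹) * ‖y‖ ≤ Nd (d + 1) y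
      ∧ Nd (d + 1) y ≤ (1 - ((2 : ℝ) ^ (2 * (d + 1) + 2))⁻¹) * ‖y‖)
    (P : ℕ → Y →L[ℝ] Y)
    (hPf : ∀ n i : ℕ, P n (fv i) = if i < n then fv i else 0)
    (hPrange : ∀ (n : ℕ) (y : Y), P n y ∈ Fd n)
    (hPlim : ∀ y : Y, Filter.Tendsto (fun n => P n y) Filter.atTop (nhds y))
    (hPl2 : ∀ (n : ℕ) (y : Y), ‖P n y‖ ≤ ‖y‖)
    (hNdmono : ∀ d n : ℕ, ∀ y ∈ Fd (d + 1), Nd (d + 1) (P n y) ≤ Nd (d + 1) y)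
    (hNdrat : ∀ d : ℕ, ∃ G : Finset Y,
      ({y : Y | y ∈ Fd (d + 1) ∧ Nd (d + 1) y ≤ 1} = convexHull ℝ ↑G)
      ∧ ∀ g ∈ G, ∃ q : ℕ → ℚ, g = ∑ i ∈ Finset.range (d + 1), (q i : ℝ) • fv i)
    (NF : Y → ℝ)
    (hNFadd : ∀ y z : Y, NF (y + z) ≤ NF y + NF z)
    (hNFsmul : ∀ (a : ℝ) (y : Y), NF (a • y) = |a| * NF y)
    (hNFpos : ∀ y : Y, 0 ≤ NF y)
    (hNFball : {y : Y | NF y ≤ 1}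
      = closure (convexHull ℝ (⋃ d : ℕ, {y : Y | y ∈ Fd (d + 1) ∧ Nd (d + 1) y ≤ 1}))) :
    (∀ y : Y, (7 / 8 : ℝ) * ‖y‖ ≤ NF y ∧ NF y ≤ ‖y‖)
    ∧ (∀ (n : ℕ) (y : Y), NF (P n y) ≤ NF y)
    ∧ (∀ d : ℕ, {y : Y | y ∈ Fd (d + 1) ∧ NF y ≤ 1}
        = convexHull ℝ (⋃ j ∈ Finset.range (d + 1), {y : Y | y ∈ Fd (j + 1) ∧ Nd (j + 1) y ≤ 1}))
    ∧ (∀ d : ℕ, ∃ G : Finset Y,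
        ({y : Y | y ∈ Fd (d + 1) ∧ NF y ≤ 1} = convexHull ℝ ↑G)
        ∧ ∀ g ∈ G, ∃ q : ℕ → ℚ, g = ∑ i ∈ Finset.range (d + 1), (q i : ℝ) • fv i) := by
  classical
  -- basic facts
  have hmono : ∀ {m n : ℕ}, m ≤ n → Fd m ≤ Fd n := by
    intro m n h
    rw [hFd, hFd]
    exact Submodule.span_mono (Set.image_mono fun i hi => lt_of_lt_of_le hi h)
  have hPfix : ∀ m n : ℕ, m ≤ n → ∀ y ∈ Fd m, P n y = y := by
    intro m n h y hy
    rw [hFd] at hy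
    induction hy using Submodule.span_induction with
    | mem x hx =>
        obtain ⟨i, hi, rfl⟩ := hx
        rw [hPf, if_pos (lt_of_lt_of_le hi h)]
    | zero => simp
    | add x y _ _ hx hy => rw [map_add, hx, hy]
    | smul a x _ hx => rw [map_smul, hx]
  have hNF0 : NF 0 = 0 := by simpa using hNFsmul 0 0
  have hpowpos : ∀ k : ℕ, (0:ℝ) < ((2:ℝ) ^ k)⁻¹ := fun k => by positivity
  have hpow8 : ∀ k : ℕ, 3 ≤ k → ((2:ℝ) ^ k)⁻¹ ≤ 1/8 := by
    intro k hk
    have h8 : (8:ℝ) ≤ (2:ℝ) ^ k := by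
      calc (8:ℝ) = 2 ^ 3 := by norm_num
      _ ≤ 2 ^ k := pow_le_pow_right₀ (by norm_num) hk
    rw [inv_le_comm₀ (by positivity) (by norm_num)]
    linarith
  -- the unit ball description
  have hmemball : ∀ y : Y, NF y ≤ 1 ↔
      y ∈ closure (convexHull ℝ (⋃ d : ℕ, {y : Y | y ∈ Fd (d + 1) ∧ Nd (d + 1) y ≤ 1})) := by
    intro y
    constructor
    · intro h; rw [← hNFball]; exact h
    · intro h; have : y ∈ {y : Y | NF y ≤ 1} := by rw [hNFball]; exact h
      exact this
  -- upper bound on the ball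
  have hball1 : ∀ y : Y, ‖y‖ ≤ 1 → NF y ≤ 1 := by
    intro y hy
    rw [hmemball]
    refine mem_closure_of_tendsto ((hPlim y).comp (Filter.tendsto_add_atTop_nat 1))
      (Filter.Eventually.of_forall fun n => ?_)
    simp only [Function.comp_apply]
    apply subset_convexHull ℝ _
    refine Set.mem_iUnion.2 ⟨n, hPrange (n+1) y, ?_⟩
    have h1 := (hNdest n (P (n+1) y) (hPrange (n+1) y)).2
    have h2 : ‖P (n+1) y‖ ≤ 1 := (hPl2 (n+1) y).trans hy
    have h3 : (0:ℝ) < ((2:ℝ) ^ (2*(n+1)+2))⁻¹ := hpowpos _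
    nlinarith [norm_nonneg (P (n+1) y)]
  have hNFle : ∀ y : Y, NF y ≤ ‖y‖ := by
    intro y
    rcases eq_or_lt_of_le (norm_nonneg y) with h0 | h0
    · have hy0 : y = 0 := norm_eq_zero.1 h0.symm
      simp [hy0, hNF0]
    · have hn : ‖(‖y‖⁻¹ • y)‖ ≤ 1 := by
        rw [norm_smul, norm_inv, norm_norm, inv_mul_cancel₀ h0.ne']
      have h1 := hball1 _ hn
      rw [hNFsmul, abs_of_pos (inv_pos.2 h0)] at h1
      have := hNFpos y
      calc NF y = ‖y‖ * (‖y‖⁻¹ * NF y) := by field_simp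
      _ ≤ ‖y‖ * 1 := mul_le_mul_of_nonneg_left h1 (norm_nonneg y)
      _ = ‖y‖ := mul_one _
  -- norm bound on the ball
  have hub : ∀ z : Y, NF z ≤ 1 → ‖z‖ ≤ 8/7 := by
    intro z hz
    have hsub : closure (convexHull ℝ (⋃ d : ℕ, {y : Y | y ∈ Fd (d + 1) ∧ Nd (d + 1) y ≤ 1}))
        ⊆ Metric.closedBall (0:Y) (8/7) := by
      refine closure_minimal (convexHull_min ?_ (convex_closedBall _ _)) Metric.isClosed_closedBall
      intro w hw
      obtain ⟨d, hwF, hwN⟩ := Set.mem_iUnion.1 hw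
      have h1 := (hNdest d w hwF).1
      have h2 : ((2:ℝ) ^ (2*(d+1)+1))⁻¹ ≤ 1/8 := hpow8 _ (by omega)
      rw [Metric.mem_closedBall, dist_zero_right]
      nlinarith [norm_nonneg w]
    have := hsub ((hmemball z).1 hz)
    simpa [Metric.mem_closedBall, dist_zero_right] using this
  have hlow : ∀ y : Y, (7/8 : ℝ) * ‖y‖ ≤ NF y := by
    intro y
    rcases eq_or_lt_of_le (hNFpos y) with h0 | h0
    · have hy0 : ‖y‖ = 0 := by
        by_contra hne
        have hpos : 0 < ‖y‖ := lt_of_le_of_ne (norm_nonneg y) (Ne.symm hne)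
        have h2 : NF ((2/‖y‖) • y) ≤ 1 := by
          rw [hNFsmul, ← h0]; simp
        have h3 := hub _ h2
        rw [norm_smul, Real.norm_eq_abs, abs_of_pos (by positivity : (0:ℝ) < 2/‖y‖)] at h3
        rw [div_mul_eq_mul_div, mul_div_assoc, div_self hpos.ne'] at h3
        norm_num at h3
      rw [hy0, ← h0]; simp
    · have h1 : NF ((NF y)⁻¹ • y) ≤ 1 := by
        rw [hNFsmul, abs_of_pos (inv_pos.2 h0), inv_mul_cancel₀ h0.ne']
      have h2 := hub _ h1
      rw [norm_smul, Real.norm_eq_abs, abs_of_pos (inv_pos.2 h0), inv_mul_le_iff₀ h0] at h2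
      linarith
  -- part 2 : monotonicity
  have hPB : ∀ n d : ℕ, ∀ z ∈ {y : Y | y ∈ Fd (d + 1) ∧ Nd (d + 1) y ≤ 1},
      P n z ∈ {y : Y | y ∈ Fd (d + 1) ∧ Nd (d + 1) y ≤ 1} := by
    rintro n d z ⟨hzF, hzN⟩
    refine ⟨?_, (hNdmono d n z hzF).trans hzN⟩
    rcases le_total n (d+1) with h | h
    · exact hmono h (hPrange n z)
    · rw [hPfix (d+1) n h z hzF]; exact hzF
  have hPball : ∀ (n : ℕ) (z : Y), NF z ≤ 1 → NF (P n z) ≤ 1 := by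
    intro n z hz
    set S : Set Y := ⋃ d : ℕ, {y : Y | y ∈ Fd (d + 1) ∧ Nd (d + 1) y ≤ 1} with hS
    have hz' : z ∈ closure (convexHull ℝ S) := (hmemball z).1 hz
    have himgS : P n '' S ⊆ S := by
      rintro w ⟨x, hx, rfl⟩
      obtain ⟨d, hd⟩ := Set.mem_iUnion.1 hx
      exact Set.mem_iUnion.2 ⟨d, hPB n d x hd⟩
    have himg : P n '' convexHull ℝ S ⊆ convexHull ℝ S := by
      have := (P n : Y →ₗ[ℝ] Y).image_convexHull S
      refine le_of_eq_of_le ?_ (convexHull_mono himgS)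
      simpa using this
    rw [hmemball]
    have h1 : P n z ∈ closure (P n '' convexHull ℝ S) :=
      image_closure_subset_closure_image (P n).continuous ⟨z, hz', rfl⟩
    exact closure_mono himg h1
  have part2 : ∀ (n : ℕ) (y : Y), NF (P n y) ≤ NF y := by
    intro n y
    rcases eq_or_lt_of_le (hNFpos y) with h0 | h0
    · have hy0 : y = 0 := by
        have := hlow y
        rw [← h0] at this
        have := norm_nonneg y
        have : ‖y‖ = 0 := by nlinarith [hlow y, (h0.symm : NF y = 0)]
        exact norm_eq_zero.1 this
      simp [hy0, hNF0]
    · have h1 : NF ((NF y)⁻¹ • y) ≤ 1 := by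
        rw [hNFsmul, abs_of_pos (inv_pos.2 h0), inv_mul_cancel₀ h0.ne']
      have h2 := hPball n _ h1
      rw [map_smul, hNFsmul, abs_of_pos (inv_pos.2 h0), inv_mul_le_iff₀ h0, mul_one] at h2
      exact h2
  -- rational generators
  choose G hGball hGrat using hNdrat
  have hKfin : ∀ d : ℕ,
      convexHull ℝ (⋃ j ∈ Finset.range (d + 1), {y : Y | y ∈ Fd (j + 1) ∧ Nd (j + 1) y ≤ 1})
        = convexHull ℝ (((Finset.range (d + 1)).biUnion G : Finset Y) : Set Y) := by
    intro d
    rw [Finset.coe_biUnion]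
    have h1 : (⋃ j ∈ Finset.range (d + 1), {y : Y | y ∈ Fd (j + 1) ∧ Nd (j + 1) y ≤ 1})
        = ⋃ j ∈ Finset.range (d + 1), convexHull ℝ (↑(G j) : Set Y) := by
      refine Set.iUnion₂_congr fun j _ => ?_
      exact hGball j
    rw [h1]
    apply le_antisymm
    · refine convexHull_min (Set.iUnion₂_subset fun j hj => ?_) (convex_convexHull ℝ _)
      exact convexHull_mono fun x hx => Set.mem_biUnion hj hx
    · exact convexHull_mono (Set.iUnion₂_mono fun j hj => subset_convexHull ℝ _)
  -- part 3
  have hNFconv : Convex ℝ {y : Y | NF y ≤ 1} := by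
    intro x hx y hy a b ha hb hab
    simp only [Set.mem_setOf_eq] at hx hy ⊢
    calc NF (a • x + b • y) ≤ NF (a • x) + NF (b • y) := hNFadd _ _
    _ = a * NF x + b * NF y := by
        rw [hNFsmul, hNFsmul, abs_of_nonneg ha, abs_of_nonneg hb]
    _ ≤ a * 1 + b * 1 := add_le_add (mul_le_mul_of_nonneg_left hx ha)
        (mul_le_mul_of_nonneg_left hy hb)
    _ = 1 := by rw [mul_one, mul_one, hab]
  have part3 : ∀ d : ℕ, {y : Y | y ∈ Fd (d + 1) ∧ NF y ≤ 1}
      = convexHull ℝ (⋃ j ∈ Finset.range (d + 1),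
          {y : Y | y ∈ Fd (j + 1) ∧ Nd (j + 1) y ≤ 1}) := by
    intro d
    set S : Set Y := ⋃ j : ℕ, {y : Y | y ∈ Fd (j + 1) ∧ Nd (j + 1) y ≤ 1} with hS
    set T : Set Y := ⋃ j ∈ Finset.range (d + 1),
        {y : Y | y ∈ Fd (j + 1) ∧ Nd (j + 1) y ≤ 1} with hT
    apply Set.Subset.antisymm
    · rintro y ⟨hyF, hyN⟩
      have hy' : y ∈ closure (convexHull ℝ S) := (hmemball y).1 hyN
      have hPy : P (d+1) y = y := hPfix (d+1) (d+1) le_rfl y hyF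
      have hclosed : IsClosed (convexHull ℝ T) := by
        rw [hT, hKfin d]
        exact (Finset.finite_toSet _).isClosed_convexHull ℝ
      have himgS : P (d+1) '' S ⊆ T := by
        rintro w ⟨z, hz, rfl⟩
        obtain ⟨j, hzF, hzN⟩ := Set.mem_iUnion.1 hz
        rcases le_or_gt j d with hjd | hjd
        · refine Set.mem_biUnion (Finset.mem_range.2 (Nat.lt_succ_of_le hjd)) ?_
          rw [hPfix (j+1) (d+1) (by omega) z hzF]
          exact ⟨hzF, hzN⟩
        · refine Set.mem_biUnion (Finset.mem_range.2 (Nat.lt_succ_self d)) ?_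
          have hwF : P (d+1) z ∈ Fd (d+1) := hPrange _ _
          have hwFj : P (d+1) z ∈ Fd (j+1) := hmono (by omega) hwF
          have h1 := (hNdest j _ hwFj).1
          have h2 : Nd (j+1) (P (d+1) z) ≤ 1 := (hNdmono j (d+1) z hzF).trans hzN
          have h3 := (hNdest d _ hwF).2
          have hexp : (2:ℝ) ^ (2*(d+1)+2) ≤ (2:ℝ) ^ (2*(j+1)+1) := by
            apply pow_le_pow_right₀ (by norm_num) (by omega)
          have hba : ((2:ℝ) ^ (2*(j+1)+1))⁻¹ ≤ ((2:ℝ) ^ (2*(d+1)+2))⁻¹ :=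
            inv_anti₀ (by positivity) hexp
          refine ⟨hwF, ?_⟩
          calc Nd (d+1) (P (d+1) z) ≤ (1 - ((2:ℝ) ^ (2*(d+1)+2))⁻¹) * ‖P (d+1) z‖ := h3
          _ ≤ (1 - ((2:ℝ) ^ (2*(j+1)+1))⁻¹) * ‖P (d+1) z‖ :=
              mul_le_mul_of_nonneg_right (by linarith) (norm_nonneg _)
          _ ≤ Nd (j+1) (P (d+1) z) := h1
          _ ≤ 1 := h2
      have himg : P (d+1) '' convexHull ℝ S ⊆ convexHull ℝ T := by
        have := (P (d+1) : Y →ₗ[ℝ] Y).image_convexHull S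
        refine le_of_eq_of_le ?_ (convexHull_mono himgS)
        simpa using this
      have h4 : P (d+1) y ∈ closure (convexHull ℝ T) :=
        closure_mono himg
          (image_closure_subset_closure_image (P (d+1)).continuous ⟨y, hy', rfl⟩)
      rw [hPy, hclosed.closure_eq] at h4
      exact h4
    · refine convexHull_min ?_ ?_
      · intro w hw
        obtain ⟨j, hj, hwF, hwN⟩ := Set.mem_iUnion₂.1 hw
        refine ⟨hmono (by simpa [Nat.succ_le_succ, Finset.mem_range] using
            Nat.succ_le_of_lt (Finset.mem_range.1 hj)) hwF, ?_⟩
        rw [hmemball]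
        exact subset_closure (subset_convexHull ℝ _ (Set.mem_iUnion.2 ⟨j, hwF, hwN⟩))
      · have h5 : {y : Y | y ∈ Fd (d+1) ∧ NF y ≤ 1}
            = (Fd (d+1) : Set Y) ∩ {y : Y | NF y ≤ 1} := rfl
        rw [h5]
        exact (Fd (d+1)).convex.inter hNFconv
  refine ⟨fun y => ⟨hlow y, hNFle y⟩, part2, part3, ?_⟩
  -- part 4
  intro d
  refine ⟨(Finset.range (d+1)).biUnion G, ?_, ?_⟩
  · rw [part3 d, hKfin d]
  · intro g hg
    obtain ⟨j, hj, hgj⟩ := Finset.mem_biUnion.1 hg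
    obtain ⟨q, hq⟩ := hGrat j g hgj
    refine ⟨fun i => if i < j + 1 then q i else 0, ?_⟩
    have hsub : Finset.range (j + 1) ⊆ Finset.range (d + 1) :=
      Finset.range_subset_range.2 (by have := Finset.mem_range.1 hj; omega)
    rw [hq, ← Finset.sum_subset hsub (fun i _ hi => by
      have hlt : ¬ i < j + 1 := by simpa [Finset.mem_range] using hi
      simp [hlt])]
    refine Finset.sum_congr rfl fun i hi => ?_
    have hlt : i < j + 1 := Finset.mem_range.1 hi
    simp [hlt]
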